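/- Let G be a group, N ⊴ G a normal subgroup, and suppose that the extension data is given: then G embeds into the Cartesian wreath product N Wr (G/N). -/

import Mathlib

/-- The action of `B` on the base group `B → A` of the Cartesian (complete) wreath product,
by right translation of coordinates. -/
def wreathAut (A B : Type*) [Group A] [Group B] : B →* MulAut (B → A) where
  toFun b :=
    { toFun := fun f x => f (x * b)
      invFun := fun f x => f (x * b⁻¹)
      left_inv := fun f => by funext x; simp [mul_assoc]
      right_inv := fun f => by funext x; simp [mul_assoc]
      map_mul' := fun f g => rfl }
  map_one' := by ext f x; simp
  map_mul' := fun b₁ b₂ => by ext f x; simp [mul_assoc]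

/-- The Cartesian (complete) wreath product `A Wr B`. -/
def WreathProduct (A B : Type*) [Group A] [Group B] : Type _ :=
  (B → A) ⋊[wreathAut A B] B

instance (A B : Type*) [Group A] [Group B] : Group (WreathProduct A B) :=
  inferInstanceAs (Group ((B → A) ⋊[wreathAut A B] B))

noncomputable def kkHom (G : Type*) [Group G] (N : Subgroup G) [N.Normal] :
    G →* WreathProduct N (G ⧸ N) where
  toFun g := ⟨fun q => ⟨q.out * g * ((q * (g : G ⧸ N)).out)⁻¹, by
      rw [← QuotientGroup.eq_one_iff]
      simp only [QuotientGroup.mk_mul, QuotientGroup.mk_inv, QuotientGroup.out_eq']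
      group⟩, g⟩
  map_one' := by
    refine SemidirectProduct.ext ?_ (by rfl)
    funext q
    ext
    simp
    rfl
  map_mul' g₁ g₂ := by
    refine SemidirectProduct.ext ?_ rfl
    funext q
    ext
    show q.out * (g₁ * g₂) * ((q * ↑(g₁ * g₂)).out)⁻¹ =
      (q.out * g₁ * ((q * ↑g₁).out)⁻¹) *
        ((q * ↑g₁).out * g₂ * ((q * ↑g₁ * ↑g₂).out)⁻¹)
    rw [show (↑(g₁ * g₂) : G ⧸ N) = ↑g₁ * ↑g₂ from rfl, ← mul_assoc]
    group

/-- Kaloujnine–Krasner: `G` embeds into the Cartesian wreath product `N Wr (G/N)`. -/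
theorem stmt_11 (G : Type*) [Group G] (N : Subgroup G) [N.Normal] :
    ∃ f : G →* WreathProduct N (G ⧸ N), Function.Injective f := by
  refine ⟨kkHom G N, ?_⟩
  rw [injective_iff_map_eq_one]
  intro g hg
  have hr : (g : G ⧸ N) = 1 := congrArg SemidirectProduct.right hg
  have hl : ((1 : G ⧸ N).out * g * (((1 : G ⧸ N) * (g : G ⧸ N)).out)⁻¹ : G) = 1 :=
    congrArg Subtype.val (congrFun (congrArg SemidirectProduct.left hg) 1)
  rw [hr, mul_one] at hl
  have h2 : g = ((1 : G ⧸ N).out)⁻¹ * 1 * ((1 : G ⧸ N).out) := by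
    rw [← hl]; group
  simpa using h2
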